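/- Let M be the n×n matrix with M(1,1)=n+1, M(1,j)=M(j,1)=-1 for j≥2, diagonal entries M(j,j) ∈ {1,3} for j≥2 with exactly r of them equal to 1 and n-r-1 equal to 3 (where 1 ≤ r ≤ n-2), and all other entries 0. Then the characteristic polynomial of M is [λ³ - (n+5)λ² + (3n+8)λ + 2r - 2n - 4]·(λ-1)^(r-1)·(λ-3)^(n-r-2). -/

import Mathlib

open Polynomial

open Matrix in

lemma det_arrow_field {K : Type*} [Field K] {m : ℕ} (a : K) (b c q : Fin m → K)
    (hq : ∀ j, q j ≠ 0) :
    (Matrix.fromBlocks (Matrix.of fun _ _ : Fin 1 => a) (Matrix.of fun _ j => b j)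
      (Matrix.of fun i _ => c i) (Matrix.diagonal q)).det
    = a * ∏ j, q j - ∑ j, b j * c j * ∏ k ∈ Finset.univ.erase j, q k := by
  have hdet : IsUnit (Matrix.diagonal q).det := by
    simp only [Matrix.det_diagonal, isUnit_iff_ne_zero, Finset.prod_ne_zero_iff]
    exact fun j _ => hq j
  have : Invertible (Matrix.diagonal q) := Matrix.invertibleOfIsUnitDet _ hdet
  have hinv : ⅟ (Matrix.diagonal q) = Matrix.diagonal (fun j => (q j)⁻¹) := by
    apply invOf_eq_right_inv
    rw [Matrix.diagonal_mul_diagonal]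
    convert Matrix.diagonal_one
    rw [mul_inv_cancel₀ (hq _)]
  rw [Matrix.det_fromBlocks₂₂, hinv]
  rw [Matrix.det_diagonal]
  have h11 : ((Matrix.of fun _ _ : Fin 1 => a) - (Matrix.of fun _ j => b j) *
      Matrix.diagonal (fun j => (q j)⁻¹) * (Matrix.of fun i _ => c i)).det
      = a - ∑ j, b j * (q j)⁻¹ * c j := by
    rw [Matrix.det_fin_one]
    simp [Matrix.mul_apply, Matrix.diagonal_apply, Ring.inverse_eq_inv', Finset.mul_sum,
      Finset.sum_mul, Ring.inverse_eq_inv]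
  rw [h11, mul_sub, Finset.mul_sum]
  congr 1
  · ring
  · apply Finset.sum_congr rfl
    intro j _
    rw [← Finset.mul_prod_erase _ _ (Finset.mem_univ j)]
    field_simp [hq j]

open Matrix in
lemma det_arrow_poly {m : ℕ} (a : ℝ[X]) (b c q : Fin m → ℝ[X]) (hq : ∀ j, q j ≠ 0) :
    (Matrix.fromBlocks (Matrix.of fun _ _ : Fin 1 => a) (Matrix.of fun _ j => b j)
      (Matrix.of fun i _ => c i) (Matrix.diagonal q)).det
    = a * ∏ j, q j - ∑ j, b j * c j * ∏ k ∈ Finset.univ.erase j, q k := by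
  set φ := algebraMap ℝ[X] (RatFunc ℝ) with hφ
  apply RatFunc.algebraMap_injective ℝ
  rw [← hφ, RingHom.map_det φ, RingHom.mapMatrix_apply]

  have hmap : ((Matrix.fromBlocks (Matrix.of fun _ _ : Fin 1 => a) (Matrix.of fun _ j => b j)
      (Matrix.of fun i _ => c i) (Matrix.diagonal q)).map φ)
      = Matrix.fromBlocks (Matrix.of fun _ _ : Fin 1 => φ a) (Matrix.of fun _ j => φ (b j))
      (Matrix.of fun i _ => φ (c i)) (Matrix.diagonal fun j => φ (q j)) := by
    ext i j
    cases i <;> cases j <;>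
      simp [Matrix.fromBlocks, Matrix.diagonal_apply, Matrix.map_apply, apply_ite φ]
  rw [hmap, det_arrow_field _ _ _ _ (fun j => by
    simpa using (map_ne_zero_iff φ (RatFunc.algebraMap_injective ℝ)).2 (hq j))]
  simp only [map_sub, _root_.map_mul, map_sum, map_prod]

open Matrix in
/-- Characteristic polynomial of the arrowhead matrix `L_S` (case `11' ∈ E`): first
row/column `(n+1, -1, …, -1)`, remaining diagonal entries in `{1, 3}` with exactly
`r` of them equal to `1` (and `n-r-1` equal to `3`), other entries `0`.  Then
`Φ(M, λ) = [λ³ - (n+5)λ² + (3n+8)λ + 2r - 2n - 4]·(λ-1)^(r-1)·(λ-3)^(n-r-2)`. -/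
theorem charpoly_LS_case2 (n r : ℕ) (hn : 3 ≤ n) (hr : 1 ≤ r) (hrn : r ≤ n - 2)
    (d : Fin n → ℝ)
    (hd : ∀ j : Fin n, j.val ≠ 0 → d j = 1 ∨ d j = 3)
    (hcard : (Finset.univ.filter (fun j : Fin n => j.val ≠ 0 ∧ d j = 1)).card = r)
    (M : Matrix (Fin n) (Fin n) ℝ)
    (hM : M = Matrix.of fun i j =>
      if i = j then (if i.val = 0 then (n : ℝ) + 1 else d i)
      else if i.val = 0 ∨ j.val = 0 then -1 else 0) :
    M.charpoly =
      (X ^ 3 - C ((n : ℝ) + 5) * X ^ 2 + C (3 * (n : ℝ) + 8) * X +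
          C (2 * (r : ℝ) - 2 * n - 4)) *
        (X - 1) ^ (r - 1) * (X - 3) ^ (n - r - 2) := by
  subst hM
  obtain ⟨m, rfl⟩ : ∃ m, n = m + 1 := ⟨n - 1, by omega⟩
  have hm : 2 ≤ m := by omega
  have hrm : r ≤ m - 1 := by omega
  -- the reindexing equivalence
  set e : Fin 1 ⊕ Fin m ≃ Fin (m + 1) :=
    finSumFinEquiv.trans (finCongr (Nat.add_comm 1 m)) with he
  set f : Fin m → Fin (m + 1) := fun j => ⟨j.val + 1, by omega⟩ with hf
  have hef : ∀ j : Fin m, e (Sum.inr j) = f j := by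
    intro j; apply Fin.ext
    simp [he, hf, finSumFinEquiv]
    try omega
  have he0 : (e (Sum.inl 0)).val = 0 := by simp [he, finSumFinEquiv]
  set N := Matrix.of fun i j : Fin (m+1) =>
      if i = j then (if i.val = 0 then ((m+1 : ℕ) : ℝ) + 1 else d i)
      else if i.val = 0 ∨ j.val = 0 then -1 else 0 with hN
  rw [Matrix.charpoly, ← Matrix.det_submatrix_equiv_self e]
  have hfv : ∀ j : Fin m, (f j).val = j.val + 1 := fun j => rfl
  have hblock : (charmatrix N).submatrix e e =
      Matrix.fromBlocks (Matrix.of fun _ _ : Fin 1 => (X : ℝ[X]) - C (((m+1:ℕ) : ℝ) + 1))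
        (Matrix.of fun _ j => (1 : ℝ[X])) (Matrix.of fun i _ => (1 : ℝ[X]))
        (Matrix.diagonal fun j => (X : ℝ[X]) - C (d (f j))) := by
    have he0' : e (Sum.inl 0) = 0 := Fin.ext he0
    have hf0 : ∀ j : Fin m, f j ≠ 0 := fun j h => by simpa [hfv] using congrArg Fin.val h
    ext i j : 1
    cases i with
    | inl i =>
      cases j with
      | inl j =>
        obtain rfl : i = 0 := Subsingleton.elim _ _
        obtain rfl : j = 0 := Subsingleton.elim _ _
        simp [hN, he0, he0']
      | inr j =>
        have hne : e (Sum.inl i) ≠ e (Sum.inr j) := by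
          simp [e.injective.ne_iff]
        obtain rfl : i = 0 := Subsingleton.elim _ _
        simp [hN, charmatrix_apply_ne _ _ _ hne, hne, he0, he0', hef, hf0, charmatrix_apply,
          (hf0 j).symm]
    | inr i =>
      cases j with
      | inl j =>
        have hne : e (Sum.inr i) ≠ e (Sum.inl j) := by
          simp [e.injective.ne_iff]
        obtain rfl : j = 0 := Subsingleton.elim _ _
        simp [hN, charmatrix_apply_ne _ _ _ hne, hne, he0, he0', hef, hf0]
      | inr j =>
        by_cases hij : i = j
        · subst hij
          simp [hN, hef, hfv, hf0]
        · have hne : e (Sum.inr i) ≠ e (Sum.inr j) := by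
            simp [e.injective.ne_iff, hij]
          have hne2 : f i ≠ f j := by
            intro h; exact hij (by
              have := congrArg Fin.val h; simp [hfv] at this; exact Fin.ext this)
          simp [hN, charmatrix_apply_ne _ _ _ hne, hef, hne2, hfv, hf0,
            Matrix.diagonal_apply_ne _ hij]
  rw [hblock, det_arrow_poly _ _ _ _ (fun j => Polynomial.X_sub_C_ne_zero _)]
  set t := Finset.univ.filter (fun j : Fin m => d (f j) = 1) with ht
  have hmem : ∀ j : Fin m, j ∈ t ↔ d (f j) = 1 := by
    intro j; simp [ht]
  have htcard : t.card = r := by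
    rw [← hcard]
    apply Finset.card_bij (fun j _ => f j)
    · intro a ha
      simp only [Finset.mem_filter, Finset.mem_univ, true_and]
      exact ⟨by simp [hfv], (hmem a).1 ha⟩
    · intro a _ b _ h
      exact Fin.ext (by have := congrArg Fin.val h; simpa [hfv] using this)
    · intro i hi
      simp only [Finset.mem_filter, Finset.mem_univ, true_and] at hi
      have hlt : i.val - 1 < m := by have := i.isLt; omega
      have hfi : f ⟨i.val - 1, hlt⟩ = i := Fin.ext (by simp [hfv]; omega)
      exact ⟨⟨i.val - 1, hlt⟩, (hmem _).2 (by rw [hfi]; exact hi.2), hfi⟩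
  have hd3 : ∀ j : Fin m, j ∉ t → d (f j) = 3 := by
    intro j hj
    exact (hd (f j) (by simp [hfv])).resolve_left (fun h => hj ((hmem j).2 h))
  have hcc : tᶜ.card = m - r := by
    rw [Finset.card_compl, htcard, Fintype.card_fin]
  have hprod : ∏ j, ((X:ℝ[X]) - C (d (f j))) = (X - C 1)^r * (X - C 3)^(m - r) := by
    rw [← Finset.prod_mul_prod_compl t]
    congr 1
    · rw [Finset.prod_congr rfl (fun j hj => by rw [(hmem j).1 hj]), Finset.prod_const, htcard]
    · rw [Finset.prod_congr rfl (fun j hj => by rw [hd3 j (Finset.mem_compl.1 hj)]),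
        Finset.prod_const, hcc]
  have herase1 : ∀ j ∈ t, ∏ k ∈ Finset.univ.erase j, ((X:ℝ[X]) - C (d (f k)))
      = (X - C 1)^(r-1) * (X - C 3)^(m - r) := by
    intro j hj
    have hsplit : Finset.univ.erase j = (t.erase j) ∪ tᶜ := by
      ext x
      simp only [Finset.mem_erase, Finset.mem_univ, and_true, Finset.mem_union,
        Finset.mem_compl]
      constructor
      · intro hx
        by_cases hxt : x ∈ t
        · exact Or.inl ⟨hx, hxt⟩
        · exact Or.inr hxt
      · rintro (⟨hx, _⟩ | hx)
        · exact hx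
        · rintro rfl; exact hx hj
    rw [hsplit, Finset.prod_union (Finset.disjoint_left.2
      (fun x hx hx2 => (Finset.mem_compl.1 hx2) (Finset.mem_of_mem_erase hx)))]
    congr 1
    · rw [Finset.prod_congr rfl
        (fun x hx => by rw [(hmem x).1 (Finset.mem_of_mem_erase hx)]),
        Finset.prod_const, Finset.card_erase_of_mem hj, htcard]
    · rw [Finset.prod_congr rfl (fun x hx => by rw [hd3 x (Finset.mem_compl.1 hx)]),
        Finset.prod_const, hcc]
  have herase3 : ∀ j ∈ tᶜ, ∏ k ∈ Finset.univ.erase j, ((X:ℝ[X]) - C (d (f k)))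
      = (X - C 1)^r * (X - C 3)^(m - r - 1) := by
    intro j hj
    have hjt : j ∉ t := Finset.mem_compl.1 hj
    have hsplit : Finset.univ.erase j = t ∪ (tᶜ.erase j) := by
      ext x
      simp only [Finset.mem_erase, Finset.mem_univ, and_true, Finset.mem_union,
        Finset.mem_compl]
      constructor
      · intro hx
        by_cases hxt : x ∈ t
        · exact Or.inl hxt
        · exact Or.inr ⟨hx, hxt⟩
      · rintro (hx | ⟨hx, _⟩)
        · rintro rfl; exact hjt hx
        · exact hx
    rw [hsplit, Finset.prod_union (Finset.disjoint_left.2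
      (fun x hx hx2 => (Finset.mem_compl.1 (Finset.mem_of_mem_erase hx2)) hx))]
    congr 1
    · rw [Finset.prod_congr rfl (fun x hx => by rw [(hmem x).1 hx]),
        Finset.prod_const, htcard]
    · rw [Finset.prod_congr rfl
        (fun x hx => by rw [hd3 x (Finset.mem_compl.1 (Finset.mem_of_mem_erase hx))]),
        Finset.prod_const, Finset.card_erase_of_mem hj, hcc]
  have hsum : ∑ j, (1:ℝ[X]) * 1 * ∏ k ∈ Finset.univ.erase j, ((X:ℝ[X]) - C (d (f k)))
      = (r : ℝ[X]) * ((X - C 1)^(r-1) * (X - C 3)^(m - r))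
        + ((m - r : ℕ) : ℝ[X]) * ((X - C 1)^r * (X - C 3)^(m - r - 1)) := by
    simp only [one_mul]
    rw [← Finset.sum_add_sum_compl t]
    congr 1
    · rw [Finset.sum_congr rfl (fun j hj => herase1 j hj), Finset.sum_const, htcard,
        nsmul_eq_mul]
    · rw [Finset.sum_congr rfl (fun j hj => herase3 j hj), Finset.sum_const, hcc,
        nsmul_eq_mul]
  rw [hprod, hsum]
  have hexp : m + 1 - r - 2 = m - r - 1 := by omega
  rw [hexp]
  have hp1 : ((X:ℝ[X]) - C 1)^r = (X - C 1)^(r-1) * (X - C 1) := by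
    conv_lhs => rw [show r = (r-1)+1 by omega]
    rw [pow_succ]
  have hp3 : ((X:ℝ[X]) - C 3)^(m - r) = (X - C 3)^(m - r - 1) * (X - C 3) := by
    conv_lhs => rw [show m - r = (m - r - 1)+1 by omega]
    rw [pow_succ]
  rw [hp1, hp3]
  have hC1 : (C 1 : ℝ[X]) = 1 := map_one C
  have hC3 : (C 3 : ℝ[X]) = 3 := map_ofNat C 3
  rw [hC1, hC3]
  simp only [map_add, _root_.map_mul, map_sub, map_ofNat, Polynomial.C_eq_natCast, Polynomial.C_1]
  push_cast [Nat.cast_sub (show r ≤ m by omega)]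
  ring
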